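/- For every positive element a ∈ ℤ_(p)^{>0} (p odd) there exists a positive-definite self-dual quadratic space E₊(a) over ℤ_(p) of rank 2 such that ⟨a⟩ embeds isometrically as a direct summand of E₊(a). Concretely, the binary form a x² + x y + c y² with c = p c', c' ∈ ℤ^{>0}_(p) chosen so that 1 − 4 a c' < 0, has discriminant 1 − 4 p a c' which is negative and a unit in ℤ_(p). -/
import Mathlib

section AuxBilin
variable {R : Type*} [CommRing R] (a c : R)

/-- Auxiliary bilinear map whose associated quadratic form is
`a x x' + x y' + c y y'`. -/
noncomputable def myB : LinearMap.BilinMap R (R × R) R :=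
  LinearMap.mk₂ R (fun z w => a * z.1 * w.1 + z.1 * w.2 + c * z.2 * w.2)
    (fun m₁ m₂ n => by simp; ring)
    (fun r m n => by simp [smul_eq_mul]; ring)
    (fun m n₁ n₂ => by simp; ring)
    (fun r m n => by simp [smul_eq_mul]; ring)

/-- The binary quadratic form `a x² + x y + c y²`. -/
noncomputable def myQ : QuadraticForm R (R × R) := (myB a c).toQuadraticMap

lemma myQ_apply (z : R × R) : myQ a c z = a * z.1 ^ 2 + z.1 * z.2 + c * z.2 ^ 2 := by
  simp [myQ, myB, LinearMap.BilinMap.toQuadraticMap_apply]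
  ring

lemma myQ_polar (z w : R × R) :
    QuadraticMap.polarBilin (myQ a c) z w
      = 2 * a * z.1 * w.1 + z.1 * w.2 + z.2 * w.1 + 2 * c * z.2 * w.2 := by
  simp [QuadraticMap.polarBilin, QuadraticMap.polar, myQ_apply]
  ring

lemma fun_dec (f : R × R →ₗ[R] R) (w : R × R) :
    f w = w.1 * f (1, 0) + w.2 * f (0, 1) := by
  have hw : w = w.1 • ((1 : R), (0 : R)) + w.2 • ((0 : R), (1 : R)) := by
    ext <;> simp
  conv_lhs => rw [hw]
  rw [map_add, map_smul, map_smul, smul_eq_mul, smul_eq_mul]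

lemma myQ_bij (v : R) (hv : v * (1 - 4 * c * a) = 1) :
    Function.Bijective ⇑(QuadraticMap.polarBilin (myQ a c)) := by
  rw [Function.bijective_iff_has_inverse]
  refine ⟨fun f => (-v * (2 * c * f (1, 0) - f (0, 1)), -v * (2 * a * f (0, 1) - f (1, 0))),
    ?_, ?_⟩
  · intro z
    have h1 := myQ_polar a c z (1, 0)
    have h2 := myQ_polar a c z (0, 1)
    refine Prod.ext ?_ ?_
    · show -v * (2 * c * _ - _) = z.1
      rw [h1, h2]
      linear_combination z.1 * hv
    · show -v * (2 * a * _ - _) = z.2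
      rw [h1, h2]
      linear_combination z.2 * hv
  · intro f
    apply LinearMap.ext
    intro w
    rw [myQ_polar, fun_dec f w]
    dsimp only
    linear_combination (w.1 * f (1, 0) + w.2 * f (0, 1)) * hv

lemma span_e1_isCompl :
    ∃ N : Submodule R (R × R),
      IsCompl (Submodule.span R {((1 : R), (0 : R))}) N := by
  refine ⟨LinearMap.range (LinearMap.inr R R R), ?_⟩
  have hsp : Submodule.span R {((1 : R), (0 : R))}
      = LinearMap.range (LinearMap.inl R R R) := by
    apply le_antisymm
    · rw [Submodule.span_le, Set.singleton_subset_iff]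
      exact ⟨1, rfl⟩
    · rintro w ⟨t, rfl⟩
      exact Submodule.mem_span_singleton.mpr ⟨t, by ext <;> simp⟩
  rw [hsp]
  exact LinearMap.isCompl_range_inl_inr
end AuxBilin

instance zpSpanPrime (p : ℕ) [hp : Fact p.Prime] : (Ideal.span {(p : ℤ)}).IsPrime := by
  rw [Ideal.span_singleton_prime (by exact_mod_cast hp.out.ne_zero)]
  exact Nat.prime_iff_prime_int.mp hp.out

/-- The ring `ℤ_(p)` of integers localized at the prime `p`. -/
abbrev Zp (p : ℕ) [Fact p.Prime] : Type :=
  Localization.AtPrime (Ideal.span {(p : ℤ)})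

lemma zp_algebraMap_inj (p : ℕ) [Fact p.Prime] :
    Function.Injective (algebraMap ℤ (Zp p)) :=
  IsLocalization.injective (Zp p)
    (fun y (hy : y ∈ (Ideal.span {(p : ℤ)}).primeCompl) =>
      mem_nonZeroDivisors_of_ne_zero (fun h0 => hy (h0 ▸ Ideal.zero_mem _)))

lemma phi_inj (p : ℕ) [Fact p.Prime] (φ : Zp p →+* ℚ) : Function.Injective φ := by
  rw [injective_iff_map_eq_zero]
  intro x hx
  obtain ⟨⟨r, s⟩, hs⟩ := IsLocalization.surj (Ideal.span {(p : ℤ)}).primeCompl x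
  have hφalg : ∀ n : ℤ, φ (algebraMap ℤ (Zp p) n) = (n : ℚ) := fun n =>
    eq_intCast (φ.comp (algebraMap ℤ (Zp p))) n
  have h1 : φ x * ((s : ℤ) : ℚ) = (r : ℚ) := by
    have := congrArg φ hs
    simpa [map_mul, hφalg] using this
  rw [hx, zero_mul] at h1
  have hr : r = 0 := by exact_mod_cast h1.symm
  rw [hr, map_zero] at hs
  have hsne : (s : ℤ) ≠ 0 := by
    intro h
    have := s.2
    rw [h] at this
    exact this (Ideal.zero_mem _)
  have hmapne : algebraMap ℤ (Zp p) (s : ℤ) ≠ 0 := fun h =>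
    hsne (zp_algebraMap_inj p (by simpa using h))
  rcases mul_eq_zero.mp hs with h | h
  · exact h
  · exact absurd h hmapne

lemma zp_p_not_unit (p : ℕ) [Fact p.Prime] : ¬ IsUnit ((p : Zp p)) := by
  have : ((p : Zp p)) = algebraMap ℤ (Zp p) (p : ℤ) := by push_cast; rfl
  rw [this, IsLocalization.AtPrime.isUnit_to_map_iff (Zp p) (Ideal.span {(p : ℤ)})]
  intro h
  exact h (Ideal.mem_span_singleton_self _)

/-- For every positive element `a ∈ ℤ_(p)^{>0}` (`p` odd; positivity is
measured via the canonical embedding `φ : ℤ_(p) → ℚ`) there exists a positive-definite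
self-dual quadratic space `E₊(a)` over `ℤ_(p)` of rank 2 such that `⟨a⟩` embeds isometrically
as a direct summand of `E₊(a)`.  Concretely, there is `c' ∈ ℤ_(p)^{>0}` with `1 − 4ac' < 0`
such that the binary form `Q(x, y) = a x² + x y + p c' y²` has discriminant `1 − 4pac'` which
is negative and a unit in `ℤ_(p)`; the vector `(1, 0)` realizes `a` and spans a direct
summand, the polar form of `Q` is unimodular (self-duality), and `Q` is positive definite. -/
theorem stmt_10 (p : ℕ) [Fact p.Prime] (hodd : p ≠ 2)
    (φ : Zp p →+* ℚ) (a : Zp p) (ha : 0 < φ a) :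
    ∃ c' : Zp p, 0 < φ c' ∧
      φ (1 - 4 * a * c') < 0 ∧
      φ (1 - 4 * (p : Zp p) * a * c') < 0 ∧
      IsUnit (1 - 4 * (p : Zp p) * a * c') ∧
      ∃ Q : QuadraticForm (Zp p) (Zp p × Zp p),
        (∀ z : Zp p × Zp p, Q z = a * z.1 ^ 2 + z.1 * z.2 + (p : Zp p) * c' * z.2 ^ 2) ∧
        Q ((1 : Zp p), (0 : Zp p)) = a ∧
        Function.Bijective ⇑(QuadraticMap.polarBilin Q) ∧
        (∃ N : Submodule (Zp p) (Zp p × Zp p),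
          IsCompl (Submodule.span (Zp p) {((1 : Zp p), (0 : Zp p))}) N) ∧
        (∀ z : Zp p × Zp p, z ≠ 0 → 0 < φ (Q z)) := by
  set A : ℚ := φ a with hA
  obtain ⟨n, hn⟩ := exists_nat_gt (1 / (4 * A))
  have hn0 : (0 : ℚ) < n := lt_of_le_of_lt (by positivity) hn
  have h4an : 1 < 4 * A * n := by
    rw [div_lt_iff₀ (by positivity)] at hn
    nlinarith
  have hp1 : (1 : ℚ) ≤ p := by exact_mod_cast (Fact.out : p.Prime).one_lt.le
  have hpan : 1 < 4 * p * A * n := by nlinarith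
  have hu : IsUnit ((1 : Zp p) - 4 * (p : Zp p) * a * (n : Zp p)) := by
    have heq : (1 : Zp p) - 4 * (p : Zp p) * a * (n : Zp p)
        = 1 - (p : Zp p) * (4 * a * n) := by ring
    rw [heq]
    refine IsLocalRing.isUnit_one_sub_self_of_mem_nonunits _ (fun h => ?_)
    exact zp_p_not_unit p (isUnit_of_mul_isUnit_left h)
  refine ⟨(n : Zp p), by simpa using hn0, ?_, ?_, hu, ?_⟩
  · have : φ (1 - 4 * a * (n : Zp p)) = 1 - 4 * A * n := by
      push_cast [map_sub, map_mul, map_one, map_natCast, map_ofNat]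
      ring
    rw [this]; linarith
  · have : φ (1 - 4 * (p : Zp p) * a * (n : Zp p)) = 1 - 4 * p * A * n := by
      push_cast [map_sub, map_mul, map_one, map_natCast, map_ofNat]
      ring
    rw [this]; linarith
  · -- the quadratic form
    set c : Zp p := (p : Zp p) * (n : Zp p) with hc
    obtain ⟨v, hv⟩ := hu.exists_left_inv
    have hv' : v * (1 - 4 * c * a) = 1 := by
      rw [hc]; linear_combination hv
    refine ⟨myQ a c, myQ_apply a c, ?_, myQ_bij a c v hv', span_e1_isCompl, ?_⟩
    · rw [myQ_apply]; simp
    · intro z hz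
      rw [myQ_apply]
      have hφ : φ (a * z.1 ^ 2 + z.1 * z.2 + c * z.2 ^ 2)
          = A * (φ z.1) ^ 2 + (φ z.1) * (φ z.2) + ((p : ℚ) * n) * (φ z.2) ^ 2 := by
        rw [hc]
        push_cast [map_add, map_mul, map_pow, map_natCast]
        ring
      rw [hφ]
      set x : ℚ := φ z.1
      set y : ℚ := φ z.2
      have hz' : z.1 ≠ 0 ∨ z.2 ≠ 0 := by
        by_contra h
        push_neg at h
        exact hz (Prod.ext h.1 h.2)
      have hxy : x ≠ 0 ∨ y ≠ 0 := by
        rcases hz' with h | h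
        · exact Or.inl fun h0 => h (phi_inj p φ (by simpa using h0))
        · exact Or.inr fun h0 => h (phi_inj p φ (by simpa using h0))
      rcases eq_or_ne y 0 with hy | hy
      · have hx : x ≠ 0 := by
          rcases hxy with h | h
          · exact h
          · exact absurd hy h
        rw [hy]
        have : 0 < x ^ 2 := sq_pos_of_ne_zero hx
        nlinarith
      · have hy2 : 0 < y ^ 2 := sq_pos_of_ne_zero hy
        nlinarith [sq_nonneg (2 * A * x + y), mul_pos ha hy2]
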